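/- Let β(φ) be the regular branch of arccos(1 + (cos φ − 1)e^{2πi/3}) with β(0)=0. Then for φ ∈ (0,π), β″(φ) = √3 (1 − cos φ)² e^{iπ/6} / sin³(β(φ)). -/

import Mathlib

open Real Set

theorem deriv2_branch_arccos (β : ℝ → ℂ)
    (hβ0 : β 0 = 0)
    (hcos : ∀ φ : ℝ, Complex.cos (β φ) =
      1 + ((Real.cos φ : ℂ) - 1) * Complex.exp (2 * Real.pi * Complex.I / 3))
    (hdiff : ∀ φ ∈ Ioo (0 : ℝ) π, DifferentiableAt ℝ β φ)
    (hdiff2 : ∀ φ ∈ Ioo (0 : ℝ) π, DifferentiableAt ℝ (deriv β) φ)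
    (hsin : ∀ φ ∈ Ioo (0 : ℝ) π, Complex.sin (β φ) ≠ 0)
    (hderiv : ∀ φ ∈ Ioo (0 : ℝ) π,
      deriv β φ = (Real.sin φ : ℂ) / Complex.sin (β φ) *
        Complex.exp (2 * Real.pi * Complex.I / 3)) :
    ∀ φ ∈ Ioo (0 : ℝ) π,
      deriv (deriv β) φ =
        (Real.sqrt 3 : ℂ) * ((1 : ℂ) - (Real.cos φ : ℂ)) ^ 2 *
          Complex.exp (Real.pi * Complex.I / 6) / Complex.sin (β φ) ^ 3 := by
  intro φ hφ
  have hSne := hsin φ hφ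
  set ω : ℂ := Complex.exp (2 * Real.pi * Complex.I / 3) with hωdef
  set E : ℂ := Complex.exp (Real.pi * Complex.I / 6) with hEdef
  -- eventual equality of deriv β with the explicit formula
  have hev : deriv β =ᶠ[nhds φ]
      (fun x => (Real.sin x : ℂ) / Complex.sin (β x) * ω) := by
    filter_upwards [isOpen_Ioo.mem_nhds hφ] with x hx
    exact hderiv x hx
  have hβd : HasDerivAt β (deriv β φ) φ := (hdiff φ hφ).hasDerivAt
  have hsinβ : HasDerivAt (fun x => Complex.sin (β x))
      (deriv β φ • Complex.cos (β φ)) φ :=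
    HasDerivAt.scomp φ (Complex.hasDerivAt_sin (β φ)) hβd
  have hsinr : HasDerivAt (fun x : ℝ => (Real.sin x : ℂ)) ((Real.cos φ : ℂ)) φ :=
    (Real.hasDerivAt_sin φ).ofReal_comp
  have hf : HasDerivAt (fun x => (Real.sin x : ℂ) / Complex.sin (β x) * ω)
      (((Real.cos φ : ℂ) * Complex.sin (β φ) -
        (Real.sin φ : ℂ) * (deriv β φ • Complex.cos (β φ))) / Complex.sin (β φ) ^ 2 * ω) φ :=
    (hsinr.div hsinβ hSne).mul_const ω
  have hd : deriv (deriv β) φ =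
      ((Real.cos φ : ℂ) * Complex.sin (β φ) -
        (Real.sin φ : ℂ) * (deriv β φ • Complex.cos (β φ))) / Complex.sin (β φ) ^ 2 * ω := by
    rw [hev.deriv_eq]; exact hf.deriv
  rw [hd, hderiv φ hφ, hcos φ]
  -- abbreviations
  set S : ℂ := Complex.sin (β φ) with hSdef
  set c : ℂ := (Real.cos φ : ℂ) with hcdef
  set s : ℂ := (Real.sin φ : ℂ) with hsdef
  have hS2 : S ^ 2 = 1 - (1 + (c - 1) * ω) ^ 2 := by
    have h := Complex.sin_sq_add_cos_sq (β φ)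
    rw [hcos φ] at h
    linear_combination h
  have hs2 : s ^ 2 = 1 - c ^ 2 := by
    rw [hsdef, hcdef]
    norm_cast
    linarith [Real.sin_sq_add_cos_sq φ]
  have hr : (Real.sqrt 3 : ℂ) ^ 2 = 3 := by
    rw [← Complex.ofReal_pow]
    norm_num [Real.sq_sqrt]
  have hI : Complex.I ^ 2 = -1 := Complex.I_sq
  have hω : ω = (-1 + (Real.sqrt 3 : ℂ) * Complex.I) / 2 := by
    rw [hωdef]
    have h1 : (2 * (Real.pi : ℂ) * Complex.I / 3) = ((2 * Real.pi / 3 : ℝ) : ℂ) * Complex.I := by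
      push_cast; ring
    have h2 : (2 * Real.pi / 3 : ℝ) = Real.pi - Real.pi / 3 := by ring
    rw [h1, Complex.exp_mul_I, ← Complex.ofReal_cos, ← Complex.ofReal_sin, h2,
      Real.cos_pi_sub, Real.sin_pi_sub, Real.cos_pi_div_three, Real.sin_pi_div_three]
    push_cast; ring
  have hE : E = ((Real.sqrt 3 : ℂ) + Complex.I) / 2 := by
    rw [hEdef]
    have h1 : ((Real.pi : ℂ) * Complex.I / 6) = ((Real.pi / 6 : ℝ) : ℂ) * Complex.I := by
      push_cast; ring
    rw [h1, Complex.exp_mul_I, ← Complex.ofReal_cos, ← Complex.ofReal_sin,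
      Real.cos_pi_div_six, Real.sin_pi_div_six]
    push_cast; ring
  simp only [smul_eq_mul]
  have key : (c * S - s * (s / S * ω * (1 + (c - 1) * ω))) / S ^ 2 * ω
      = (c * S ^ 2 - s ^ 2 * ω * (1 + (c - 1) * ω)) * ω / S ^ 3 := by
    field_simp
  rw [key, hs2, hS2, hω, hE]
  congr 1
  set r : ℂ := (Real.sqrt 3 : ℂ)
  set i : ℂ := Complex.I
  linear_combination
    ((c - 1/2 - c^2/2) + i^2 * (-5/8 + 5/4*c - 5/8*c^2) + r*i^3 * (1/8 - 1/4*c + 1/8*c^2)) * hr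
    + ((-15/8 + 15/4*c - 15/8*c^2) + r*i * (3/8 - 3/4*c + 3/8*c^2)) * hI
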